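/- The second cohomology of the super w∞ 3-algebra with values in the trivial module ℂ vanishes: every even 2-cocycle f : ∧²w∞ × w∞ → ℂ (satisfying δ²f(x,y,z) = −f([x,y]_L,z) − (−1)^{|x||y|}f(y,ad(x)(z)) + f(x,ad(y)(z)) = 0) is a coboundary δ¹g for some linear g : w∞ → ℂ with δ¹g(x,z) = −g(ad(x)(z)). Hence H₀²(w∞,ℂ) = 0. -/

import Mathlib

noncomputable section

/-- Basis indices of the super `w∞` 3-algebra: `L_m^i`, `L̄_m^i` (even) and
`h_m^{i+1/2}`, `h̄_m^{i+1/2}` (odd). -/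
inductive WIdx : Type
  | L (m : ℤ) (i : ℕ)
  | Lb (m : ℤ) (i : ℕ)
  | H (m : ℤ) (i : ℕ)
  | Hb (m : ℤ) (i : ℕ)
deriving DecidableEq

/-- The underlying superspace of the super `w∞` 3-algebra: the free `ℂ`-module on `WIdx`. -/
abbrev W : Type := WIdx →₀ ℂ

/-- Basis vectors. -/
def e (a : WIdx) : W := Finsupp.single a 1

/-- Parity of a basis index. -/
def par : WIdx → ZMod 2
  | .L _ _ => 0
  | .Lb _ _ => 0
  | .H _ _ => 1
  | .Hb _ _ => 1

/-- The sign `(-1)^a` of a parity. -/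
def sg (a : ZMod 2) : ℂ := (-1 : ℂ) ^ a.val

/-- Structure constant `h(n−m)+j(m−k)+i(k−n)`. -/
def co (m : ℤ) (i : ℕ) (n : ℤ) (j : ℕ) (k : ℤ) (h : ℕ) : ℂ :=
  (h : ℂ) * ((n : ℂ) - (m : ℂ)) + (j : ℂ) * ((m : ℂ) - (k : ℂ))
    + (i : ℂ) * ((k : ℂ) - (n : ℂ))

/-- Structure constant `i(p−r)+α(r−m)+β(m−p)`. -/
def dd (m : ℤ) (i : ℕ) (p : ℤ) (α : ℕ) (r : ℤ) (β : ℕ) : ℂ :=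
  (i : ℂ) * ((p : ℂ) - (r : ℂ)) + (α : ℂ) * ((r : ℂ) - (m : ℂ))
    + (β : ℂ) * ((m : ℂ) - (p : ℂ))

open WIdx in
/-- The 3-bracket of the super `w∞` 3-algebra on basis indices; unlisted brackets are
obtained by super-skew-symmetry or vanish. -/
def wbr : WIdx → WIdx → WIdx → W
  | L m i, L n j, L k u => co m i n j k u • e (L (m+n+k) (i+j+u-1))
  | L m i, L n j, Lb k u => co m i n j k u • e (Lb (m+n+k) (i+j+u-1))
  | L m i, Lb k u, L n j => co m i k u n j • e (Lb (m+n+k) (i+j+u-1))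
  | Lb k u, L m i, L n j => co k u m i n j • e (Lb (m+n+k) (i+j+u-1))
  | L m i, L n j, H p α => co m i n j p α • e (H (m+n+p) (i+j+α-1))
  | L m i, H p α, L n j => co m i p α n j • e (H (m+n+p) (i+j+α-1))
  | H p α, L m i, L n j => co p α m i n j • e (H (m+n+p) (i+j+α-1))
  | L m i, L n j, Hb p α => co m i n j p α • e (Hb (m+n+p) (i+j+α-1))
  | L m i, Hb p α, L n j => co m i p α n j • e (Hb (m+n+p) (i+j+α-1))
  | Hb p α, L m i, L n j => co p α m i n j • e (Hb (m+n+p) (i+j+α-1))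
  | L m i, H p α, Hb r β => dd m i p α r β • e (Lb (m+p+r) (i+α+β-1))
  | L m i, Hb r β, H p α => dd m i p α r β • e (Lb (m+p+r) (i+α+β-1))
  | H p α, L m i, Hb r β => (- dd m i p α r β) • e (Lb (m+p+r) (i+α+β-1))
  | Hb r β, L m i, H p α => (- dd m i p α r β) • e (Lb (m+p+r) (i+α+β-1))
  | H p α, Hb r β, L m i => dd m i p α r β • e (Lb (m+p+r) (i+α+β-1))
  | Hb r β, H p α, L m i => dd m i p α r β • e (Lb (m+p+r) (i+α+β-1))
  | _, _, _ => 0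

/-- The trilinear extension of `wbr` to the whole of `W`. -/
def wbracket (x y z : W) : W :=
  x.sum fun a ca => y.sum fun b cb => z.sum fun c cc => (ca * cb * cc) • wbr a b c

/-- The `ℤ/2`-grading of `w∞`: the span of the basis vectors of a given parity. -/
def wgr (j : ZMod 2) : Submodule ℂ W :=
  Submodule.span ℂ {w : W | ∃ a : WIdx, par a = j ∧ w = e a}

/-! ### Auxiliary machinery for the proof -/

/-- The mode (lower integer label) of a basis index. -/
def modeOf : WIdx → ℤ
  | .L m _ => m
  | .Lb m _ => m
  | .H m _ => m
  | .Hb m _ => m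

/-- The superscript index of a basis index. -/
def idxOf : WIdx → ℕ
  | .L _ i => i
  | .Lb _ i => i
  | .H _ i => i
  | .Hb _ i => i

open WIdx in
/-- The structure coefficient of the 3-bracket on basis indices. -/
def cf : WIdx → WIdx → WIdx → ℂ
  | L m i, L n j, L k u => co m i n j k u
  | L m i, L n j, Lb k u => co m i n j k u
  | L m i, Lb k u, L n j => co m i k u n j
  | Lb k u, L m i, L n j => co k u m i n j
  | L m i, L n j, H p α => co m i n j p α
  | L m i, H p α, L n j => co m i p α n j
  | H p α, L m i, L n j => co p α m i n j
  | L m i, L n j, Hb p α => co m i n j p α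
  | L m i, Hb p α, L n j => co m i p α n j
  | Hb p α, L m i, L n j => co p α m i n j
  | L m i, H p α, Hb r β => dd m i p α r β
  | L m i, Hb r β, H p α => dd m i p α r β
  | H p α, L m i, Hb r β => - dd m i p α r β
  | Hb r β, L m i, H p α => - dd m i p α r β
  | H p α, Hb r β, L m i => dd m i p α r β
  | Hb r β, H p α, L m i => dd m i p α r β
  | _, _, _ => 0

open WIdx in
/-- The target basis index of the 3-bracket on basis indices. -/
def tgt : WIdx → WIdx → WIdx → WIdx
  | L m i, L n j, L k u => L (m+n+k) (i+j+u-1)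
  | L m i, L n j, Lb k u => Lb (m+n+k) (i+j+u-1)
  | L m i, Lb k u, L n j => Lb (m+n+k) (i+j+u-1)
  | Lb k u, L m i, L n j => Lb (m+n+k) (i+j+u-1)
  | L m i, L n j, H p α => H (m+n+p) (i+j+α-1)
  | L m i, H p α, L n j => H (m+n+p) (i+j+α-1)
  | H p α, L m i, L n j => H (m+n+p) (i+j+α-1)
  | L m i, L n j, Hb p α => Hb (m+n+p) (i+j+α-1)
  | L m i, Hb p α, L n j => Hb (m+n+p) (i+j+α-1)
  | Hb p α, L m i, L n j => Hb (m+n+p) (i+j+α-1)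
  | L m i, H p α, Hb r β => Lb (m+p+r) (i+α+β-1)
  | L m i, Hb r β, H p α => Lb (m+p+r) (i+α+β-1)
  | H p α, L m i, Hb r β => Lb (m+p+r) (i+α+β-1)
  | Hb r β, L m i, H p α => Lb (m+p+r) (i+α+β-1)
  | H p α, Hb r β, L m i => Lb (m+p+r) (i+α+β-1)
  | Hb r β, H p α, L m i => Lb (m+p+r) (i+α+β-1)
  | a, b, c => L (modeOf a + modeOf b + modeOf c) 0

lemma wbr_eq (a b c : WIdx) : wbr a b c = cf a b c • e (tgt a b c) := by
  cases a <;> cases b <;> cases c <;> simp only [wbr, cf, tgt, zero_smul]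

lemma mode_tgt (a b c : WIdx) :
    modeOf (tgt a b c) = modeOf a + modeOf b + modeOf c := by
  cases a <;> cases b <;> cases c <;> simp only [tgt, modeOf] <;> ring

lemma idx_tgt (a b c : WIdx) (h : cf a b c ≠ 0) :
    (idxOf (tgt a b c) : ℤ) = idxOf a + idxOf b + idxOf c - 1 := by
  cases a <;> cases b <;> cases c <;> rename_i m i n j k u <;>
    simp only [cf] at h <;>
    first
      | exact absurd rfl h
      | · have h0 : ¬(i = 0 ∧ j = 0 ∧ u = 0) := by
            rintro ⟨rfl, rfl, rfl⟩
            exact h (by norm_num [co, dd])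
          simp only [tgt, idxOf]
          omega

lemma wbr_L00 (w : WIdx) :
    wbr (.L 0 0) (.L 0 1) w = (-(modeOf w : ℂ)) • e w := by
  cases w <;> rename_i m i <;>
    · show co 0 0 0 1 m i • e _ = _
      norm_num [co, modeOf]

lemma wbr_L1 (w : WIdx) :
    wbr (.L 1 0) (.L (-1) 1) w
      = ((1 : ℂ) - 2 * (idxOf w : ℂ) - (modeOf w : ℂ)) • e w := by
  cases w <;> rename_i m i <;>
    · show co 1 0 (-1) 1 m i • e _ = _
      norm_num [co, modeOf, idxOf]
      ring_nf

lemma wbracket_e (a b c : WIdx) : wbracket (e a) (e b) (e c) = wbr a b c := by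
  unfold wbracket e
  rw [Finsupp.sum_single_index, Finsupp.sum_single_index, Finsupp.sum_single_index]
  · simp
  · simp
  · simp [Finsupp.sum_single_index]
  · simp [Finsupp.sum_single_index]

lemma sg_zero : sg 0 = 1 := by simp [sg]

lemma par_L (m : ℤ) (i : ℕ) : par (.L m i) = 0 := rfl

lemma wbracket_zero₁ (y z : W) : wbracket 0 y z = 0 := by simp [wbracket]

lemma wbracket_zero₂ (x z : W) : wbracket x 0 z = 0 := by simp [wbracket]

lemma wbracket_zero₃ (x y : W) : wbracket x y 0 = 0 := by simp [wbracket]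

lemma wbracket_add₁ (x x' y z : W) :
    wbracket (x + x') y z = wbracket x y z + wbracket x' y z := by
  unfold wbracket
  rw [Finsupp.sum_add_index']
  · intro a; simp
  · intro a b₁ b₂
    rw [← Finsupp.sum_add]
    congr 1; funext b cb
    rw [← Finsupp.sum_add]
    congr 1; funext c cc
    rw [← add_smul]; ring_nf

lemma wbracket_add₂ (x y y' z : W) :
    wbracket x (y + y') z = wbracket x y z + wbracket x y' z := by
  unfold wbracket
  rw [← Finsupp.sum_add]
  congr 1; funext a ca
  rw [Finsupp.sum_add_index']
  · intro b; simp
  · intro b b₁ b₂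
    rw [← Finsupp.sum_add]
    congr 1; funext c cc
    rw [← add_smul]; ring_nf

lemma wbracket_add₃ (x y z z' : W) :
    wbracket x y (z + z') = wbracket x y z + wbracket x y z' := by
  unfold wbracket
  rw [← Finsupp.sum_add]
  congr 1; funext a ca
  rw [← Finsupp.sum_add]
  congr 1; funext b cb
  rw [Finsupp.sum_add_index']
  · intro c; simp
  · intro c c₁ c₂
    rw [← add_smul]; ring_nf

lemma wbracket_single (a b c : WIdx) (ca cb cc : ℂ) :
    wbracket (Finsupp.single a ca) (Finsupp.single b cb) (Finsupp.single c cc)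
      = (ca * cb * cc) • wbr a b c := by
  unfold wbracket
  rw [Finsupp.sum_single_index, Finsupp.sum_single_index, Finsupp.sum_single_index]
  · simp
  · simp
  · simp

/-- the second cohomology of the super `w∞` 3-algebra with values in the trivial
module `ℂ` vanishes: every even 2-cocycle `F : ∧²w∞ × w∞ → ℂ` is the coboundary
`δ¹g(x,z) = −g(ad(x)(z))` of some linear `g : w∞ → ℂ`; hence `H₀²(w∞,ℂ) = 0`. -/
theorem H2_trivial_coefficients_vanishes
    (F : W →ₗ[ℂ] W →ₗ[ℂ] W →ₗ[ℂ] ℂ)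
    -- `F` is even (it kills triples of odd total parity, since `ℂ` is purely even)
    (heven : ∀ a b c : WIdx, par a + par b + par c ≠ 0 → F (e a) (e b) (e c) = 0)
    -- `F` is super-skew-symmetric in the two wedge arguments
    (hskew : ∀ (a b : WIdx) (w : W),
      F (e a) (e b) w = - (sg (par a * par b) * F (e b) (e a) w))
    -- `F` is a 2-cocycle: `δ²F(x,y,z) = −F([x,y]_L,z) − (−1)^{|x||y|}F(y,ad(x)z) + F(x,ad(y)z) = 0`
    (hcocycle : ∀ a₁ a₂ b₁ b₂ c : WIdx,
      - F (wbracket (e a₁) (e a₂) (e b₁)) (e b₂) (e c)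
        - sg ((par a₁ + par a₂) * par b₁) *
            F (e b₁) (wbracket (e a₁) (e a₂) (e b₂)) (e c)
        - sg ((par a₁ + par a₂) * (par b₁ + par b₂)) *
            F (e b₁) (e b₂) (wbracket (e a₁) (e a₂) (e c))
        + F (e a₁) (e a₂) (wbracket (e b₁) (e b₂) (e c)) = 0) :
    ∃ g : W →ₗ[ℂ] ℂ, ∀ x y z : W, F x y z = - g (wbracket x y z) := by
  classical
  set Gf : WIdx → ℂ := fun d =>
    if modeOf d = 0 then
      -(1 / (1 - 2 * (idxOf d : ℂ)))
        * F (e (.L 1 0)) (e (.L (-1) 1)) (e d)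
    else (1 / (modeOf d : ℂ)) * F (e (.L 0 0)) (e (.L 0 1)) (e d) with hGf
  set g : W →ₗ[ℂ] ℂ := Finsupp.linearCombination ℂ Gf with hgdef
  have hg : ∀ d : WIdx, g (e d) = Gf d := by
    intro d; simp [hgdef, e, Finsupp.linearCombination_single]
  refine ⟨g, ?_⟩
  -- key identity from the cocycle condition with (L₀⁰, L₀¹)
  have key1 : ∀ b₁ b₂ c : WIdx,
      ((modeOf b₁ : ℂ) + (modeOf b₂ : ℂ) + (modeOf c : ℂ)) * F (e b₁) (e b₂) (e c)
        = - F (e (.L 0 0)) (e (.L 0 1)) (wbr b₁ b₂ c) := by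
    intro b₁ b₂ c
    have h := hcocycle (.L 0 0) (.L 0 1) b₁ b₂ c
    simp only [wbracket_e, wbr_L00, par_L, add_zero, zero_add, zero_mul, sg_zero,
      one_mul, map_smul, LinearMap.smul_apply, smul_eq_mul] at h
    linear_combination h
  -- key identity from the cocycle condition with (L₁⁰, L₋₁¹)
  have key2 : ∀ b₁ b₂ c : WIdx,
      ((3 : ℂ) - 2 * ((idxOf b₁ : ℂ) + (idxOf b₂ : ℂ) + (idxOf c : ℂ))
          - ((modeOf b₁ : ℂ) + (modeOf b₂ : ℂ) + (modeOf c : ℂ)))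
          * F (e b₁) (e b₂) (e c)
        = F (e (.L 1 0)) (e (.L (-1) 1)) (wbr b₁ b₂ c) := by
    intro b₁ b₂ c
    have h := hcocycle (.L 1 0) (.L (-1) 1) b₁ b₂ c
    simp only [wbracket_e, wbr_L1, par_L, add_zero, zero_add, zero_mul, sg_zero,
      one_mul, map_smul, LinearMap.smul_apply, smul_eq_mul] at h
    linear_combination -h
  -- the statement on basis triples
  have key : ∀ b₁ b₂ c : WIdx,
      F (e b₁) (e b₂) (e c) = - g (wbr b₁ b₂ c) := by
    intro b₁ b₂ c
    have hgw : g (wbr b₁ b₂ c) = cf b₁ b₂ c * Gf (tgt b₁ b₂ c) := by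
      rw [wbr_eq, map_smul, smul_eq_mul, hg]
    by_cases hM : modeOf b₁ + modeOf b₂ + modeOf c = 0
    · -- total mode zero : use key2
      have h := key2 b₁ b₂ c
      rw [wbr_eq, map_smul, smul_eq_mul] at h
      have hM' : (modeOf b₁ : ℂ) + (modeOf b₂ : ℂ) + (modeOf c : ℂ) = 0 := by
        have h1 : ((modeOf b₁ + modeOf b₂ + modeOf c : ℤ) : ℂ) = 0 := by
          rw [hM]; simp
        push_cast at h1
        linear_combination h1
      have hmt : modeOf (tgt b₁ b₂ c) = 0 := by rw [mode_tgt]; exact hM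
      have hGt : Gf (tgt b₁ b₂ c)
          = -(1 / (1 - 2 * (idxOf (tgt b₁ b₂ c) : ℂ)))
              * F (e (.L 1 0)) (e (.L (-1) 1)) (e (tgt b₁ b₂ c)) := by
        rw [hGf]
        simp only [hmt, if_pos]
      have hden : (3 : ℂ) - 2 * ((idxOf b₁ : ℂ) + (idxOf b₂ : ℂ) + (idxOf c : ℂ)) ≠ 0 := by
        have hz : (3 : ℤ) - 2 * ((idxOf b₁ : ℤ) + (idxOf b₂ : ℤ) + (idxOf c : ℤ)) ≠ 0 := by
          omega
        intro hcon
        apply hz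
        have h2 : ((3 - 2 * ((idxOf b₁ : ℤ) + (idxOf b₂ : ℤ) + (idxOf c : ℤ)) : ℤ) : ℂ) = 0 := by
          push_cast
          linear_combination hcon
        exact_mod_cast h2
      rw [hM', sub_zero] at h
      by_cases hc : cf b₁ b₂ c = 0
      · rw [hgw, hc, zero_mul, neg_zero]
        rw [hc, zero_mul] at h
        rcases mul_eq_zero.mp h with h' | h'
        · exact absurd h' hden
        · exact h'
      · have hidx := idx_tgt b₁ b₂ c hc
        have hden2 : (1 : ℂ) - 2 * (idxOf (tgt b₁ b₂ c) : ℂ)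
            = 3 - 2 * ((idxOf b₁ : ℂ) + (idxOf b₂ : ℂ) + (idxOf c : ℂ)) := by
          have h3 := congrArg (fun t : ℤ => (t : ℂ)) hidx
          push_cast at h3
          linear_combination -2 * h3
        rw [hgw, hGt, hden2]
        field_simp
        linear_combination h
    · -- total mode nonzero : use key1
      have h := key1 b₁ b₂ c
      rw [wbr_eq, map_smul, smul_eq_mul] at h
      have hmt : modeOf (tgt b₁ b₂ c) ≠ 0 := by rw [mode_tgt]; exact hM
      have hGt : Gf (tgt b₁ b₂ c)
          = (1 / (modeOf (tgt b₁ b₂ c) : ℂ))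
              * F (e (.L 0 0)) (e (.L 0 1)) (e (tgt b₁ b₂ c)) := by
        rw [hGf]
        simp only [if_neg hmt]
      have hM' : ((modeOf b₁ : ℂ) + (modeOf b₂ : ℂ) + (modeOf c : ℂ)) ≠ 0 := by
        intro hcon
        apply hM
        have h2 : ((modeOf b₁ + modeOf b₂ + modeOf c : ℤ) : ℂ) = 0 := by
          push_cast
          linear_combination hcon
        exact_mod_cast h2
      have hmtc : (modeOf (tgt b₁ b₂ c) : ℂ)
          = (modeOf b₁ : ℂ) + (modeOf b₂ : ℂ) + (modeOf c : ℂ) := by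
        rw [mode_tgt]; push_cast; ring
      rw [hgw, hGt, hmtc]
      field_simp
      linear_combination h
  -- extend to all of W by trilinearity
  intro x y z
  induction x using Finsupp.induction_linear with
  | zero => simp [wbracket_zero₁]
  | add x x' hx hx' =>
    simp only [wbracket_add₁, map_add, LinearMap.add_apply, hx, hx']
    ring
  | single a ca =>
    induction y using Finsupp.induction_linear with
    | zero => simp [wbracket_zero₂]
    | add y y' hy hy' =>
      simp only [wbracket_add₂, map_add, LinearMap.add_apply, hy, hy']
      ring
    | single b cb =>
      induction z using Finsupp.induction_linear with
      | zero => simp [wbracket_zero₃]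
      | add z z' hz hz' =>
        simp only [wbracket_add₃, map_add, hz, hz']
        ring
      | single c cc =>
        have hsing : ∀ (d : WIdx) (cd : ℂ), Finsupp.single d cd = cd • e d := by
          intro d cd; rw [e, Finsupp.smul_single, smul_eq_mul, mul_one]
        rw [wbracket_single, hsing a ca, hsing b cb, hsing c cc]
        simp only [map_smul, LinearMap.smul_apply, smul_eq_mul]
        rw [key a b c]
        ring
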